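/- Let (Ω, F, P) be a probability space satisfying the hypotheses below. Then for every x ∈ ℤ^d, μ(x) ≤ (C₁ + E[t(x)]) · liminf_{n → ∞} (1/n) · #{ k ∈ {1, …, n} : E[t((k−1)x)] ≤ E[t(kx)] }. (This is the key intermediate inequality in the proof of the second statement of Theorem 1.1, obtained by telescoping E[t(nx)] over the index set I_{n,x} of correctly ordered expected hitting times and applying Lemma 3.1 and Proposition 1.3.) -/

import Mathlib

open MeasureTheory Filter Finset

/-- Key intermediate inequality in the proof of the second statement of
Theorem 1.1: `μ(x) ≤ (C₁ + E[t(x)]) · liminf_n (1/n) #{k ≤ n : E[t((k-1)x)] ≤ E[t(kx)]}`. -/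
def onorm {d : ℕ} (x : Fin d → ℤ) : ℕ := ∑ i, (x i).natAbs

/-- First statement of Theorem 1.1 (Uniformity of hitting times):
`lim_{|x|→∞} liminf_{n→∞} (1/n) ∑_{k=1}^n P(t((k-1)x) ≤ t(kx)) = 1`,
the limit in `x` being along the cofinite filter on `ℤ^d`. -/
theorem stmt_9
    {Ω : Type*} [MeasurableSpace Ω] (P : Measure Ω) [IsProbabilityMeasure P]
    (d : ℕ) (hd : 1 ≤ d)
    (t σ : (Fin d → ℤ) → Ω → ℝ)
    (ht_meas : ∀ x, Measurable (t x)) (hσ_meas : ∀ x, Measurable (σ x))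
    (ht_nonneg : ∀ x ω, 0 ≤ t x ω) (hσ_nonneg : ∀ x ω, 0 ≤ σ x ω)
    (ht_int : ∀ x, Integrable (t x) P) (hσ_int : ∀ x, Integrable (σ x) P)
    -- (i) the renewal bound of Lemma 3.1
    (hrenewal : ∀ x y, ∫ ω in {ω | σ y ω ≤ t x ω}, (t x ω - σ y ω) ∂P
      ≤ (P {ω | σ y ω ≤ t x ω}).toReal * ∫ ω, t (x - y) ω ∂P)
    -- (ii) t ≤ σ a.s. and uniform bound on E[σ - t]
    (htσ : ∀ y, ∀ᵐ ω ∂P, t y ω ≤ σ y ω)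
    (C₁ : ℝ) (hC₁ : ∀ y, ∫ ω, (σ y ω - t y ω) ∂P ≤ C₁)
    -- (iii) normalized expected hitting times converge
    (μ : (Fin d → ℤ) → ℝ) (hμ_nonneg : ∀ x, 0 ≤ μ x)
    (hμ : ∀ x, Tendsto (fun n : ℕ => (∫ ω, t (n • x) ω ∂P) / n) atTop (nhds (μ x)))
    :
    ∀ x : Fin d → ℤ, μ x ≤ (C₁ + ∫ ω, t x ω ∂P) * liminf (fun n : ℕ =>
        (1 / (n : ℝ)) * ((Finset.Icc 1 n).filter (fun k =>
          ∫ ω, t ((k - 1) • x) ω ∂P ≤ ∫ ω, t (k • x) ω ∂P)).card) atTop := by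
  intro x
  set A : ℕ → ℝ := fun k => ∫ ω, t (k • x) ω ∂P with hA
  set c : ℝ := C₁ + ∫ ω, t x ω ∂P with hc
  set f : ℕ → ℝ := fun n : ℕ =>
      (1 / (n : ℝ)) * ((Finset.Icc 1 n).filter (fun k =>
          ∫ ω, t ((k - 1) • x) ω ∂P ≤ ∫ ω, t (k • x) ω ∂P)).card with hf
  set S : ℕ → ℕ := fun n => ((Finset.Icc 1 n).filter (fun k =>
          ∫ ω, t ((k - 1) • x) ω ∂P ≤ ∫ ω, t (k • x) ω ∂P)).card with hS
  have hA_nonneg : ∀ k, 0 ≤ A k := fun k => integral_nonneg fun ω => ht_nonneg _ ω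
  have htx0 : (0:ℝ) ≤ ∫ ω, t x ω ∂P := integral_nonneg fun ω => ht_nonneg _ ω
  have hC₁0 : 0 ≤ C₁ := by
    refine le_trans ?_ (hC₁ 0)
    exact integral_nonneg_of_ae ((htσ 0).mono fun ω h => sub_nonneg.2 h)
  have hc0 : 0 ≤ c := by positivity
  -- the key step inequality
  have step : ∀ k : ℕ, A (k + 1) ≤ A k + c := by
    intro k
    set y := k • x with hy
    set z := (k + 1) • x with hz
    have hzy : z - y = x := by
      rw [hz, hy, succ_nsmul]; abel
    have hset : MeasurableSet {ω | σ y ω ≤ t z ω} :=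
      measurableSet_le (hσ_meas y) (ht_meas z)
    have hind_int : Integrable
        (Set.indicator {ω | σ y ω ≤ t z ω} fun ω => t z ω - σ y ω) P :=
      ((ht_int z).sub (hσ_int y)).indicator hset
    have hpt : ∀ ω, t z ω ≤ σ y ω +
        Set.indicator {ω | σ y ω ≤ t z ω} (fun ω => t z ω - σ y ω) ω := by
      intro ω
      simp only [Set.indicator_apply, Set.mem_setOf_eq]
      split_ifs with h
      · linarith
      · linarith [le_of_not_ge h]
    have h1 : A (k + 1) ≤ ∫ ω, (σ y ω +
        Set.indicator {ω | σ y ω ≤ t z ω} (fun ω => t z ω - σ y ω) ω) ∂P :=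
      integral_mono (ht_int z) ((hσ_int y).add hind_int) hpt
    rw [integral_add (hσ_int y) hind_int, integral_indicator hset] at h1
    have h4 := hrenewal z y
    rw [hzy] at h4
    have h5 : (P {ω | σ y ω ≤ t z ω}).toReal * ∫ ω, t x ω ∂P ≤ ∫ ω, t x ω ∂P := by
      have hle : (P {ω | σ y ω ≤ t z ω}).toReal ≤ 1 := by
        have := prob_le_one (μ := P) (s := {ω | σ y ω ≤ t z ω})
        simpa using ENNReal.toReal_mono ENNReal.one_ne_top this
      exact mul_le_of_le_one_left htx0 hle
    have h6 : ∫ ω, σ y ω ∂P ≤ C₁ + A k := by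
      have hsub := integral_sub (hσ_int y) (ht_int y)
      have := hC₁ y
      rw [hsub] at this
      have hAk : A k = ∫ ω, t y ω ∂P := rfl
      linarith
    have hA1 : A (k + 1) = ∫ ω, t z ω ∂P := rfl
    linarith
  -- telescoping over the index set
  have hcard : ∀ n, A n ≤ A 0 + c * S n := by
    intro n
    induction n with
    | zero => simp [hS]
    | succ n ih =>
      have hIcc : Finset.Icc 1 (n + 1) = insert (n + 1) (Finset.Icc 1 n) := by
        exact (Finset.insert_Icc_right_eq_Icc_add_one (by omega)).symm
      have hmem : (n + 1) ∉ Finset.Icc 1 n := by simp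
      by_cases hk : A n ≤ A (n + 1)
      · have hScard : S (n + 1) = S n + 1 := by
          rw [hS]
          simp only [hIcc, Finset.filter_insert]
          rw [if_pos, Finset.card_insert_of_notMem]
          · intro h; exact hmem (Finset.mem_of_mem_filter _ h)
          · simpa [hA] using hk
        have := step n
        rw [hScard]
        push_cast
        linarith
      · have hScard : S (n + 1) = S n := by
          rw [hS]
          simp only [hIcc, Finset.filter_insert]
          rw [if_neg]
          simpa [hA] using hk
        rw [hScard]
        linarith [le_of_not_ge hk]
  -- bounds on f
  have hf_le_one : ∀ n, f n ≤ 1 := by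
    intro n
    rcases Nat.eq_zero_or_pos n with h | h
    · simp [hf, h]
    · have hcardle : (S n : ℝ) ≤ n := by
        have : S n ≤ n := by
          calc S n ≤ (Finset.Icc 1 n).card := Finset.card_filter_le _ _
          _ = n := by simp
        exact_mod_cast this
      have hn : (0:ℝ) < n := by exact_mod_cast h
      rw [hf]
      calc (1 / (n:ℝ)) * (S n : ℝ) ≤ (1 / (n:ℝ)) * n := by
            apply mul_le_mul_of_nonneg_left hcardle
            positivity
        _ = 1 := by field_simp
  have hf_nonneg : ∀ n, 0 ≤ f n := by
    intro n; rw [hf]; positivity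
  have hcobdd : IsCoboundedUnder (· ≥ ·) atTop f :=
    isCoboundedUnder_ge_of_le atTop hf_le_one
  set L := liminf f atTop with hL
  -- final ε argument
  refine le_of_forall_pos_le_add fun ε hε => ?_
  set δ : ℝ := ε / (c + 2) with hδ
  have hδ0 : 0 < δ := by positivity
  have hfreq : ∃ᶠ n in atTop, f n < L + δ :=
    frequently_lt_of_liminf_lt hcobdd (by linarith)
  have hev1 : ∀ᶠ n : ℕ in atTop, A 0 / n ≤ δ := by
    have h0 : Tendsto (fun n : ℕ => A 0 / n) atTop (nhds 0) :=
      tendsto_const_div_atTop_nhds_zero_nat (A 0)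
    have := h0.eventually (eventually_le_nhds hδ0)
    simpa using this
  have hev2 : ∀ᶠ n : ℕ in atTop, μ x - δ ≤ A n / n := by
    have := (hμ x).eventually (eventually_ge_nhds (by linarith : μ x - δ < μ x))
    simpa [hA] using this
  have hev3 : ∀ᶠ n : ℕ in atTop, 1 ≤ n := eventually_ge_atTop 1
  obtain ⟨n, hfn, hδn, hμn, hn1⟩ :=
    (hfreq.and_eventually (hev1.and (hev2.and hev3))).exists
  have hnpos : (0:ℝ) < n := by exact_mod_cast hn1
  have hdiv : A n / n ≤ A 0 / n + c * f n := by
    have h1 : A n / n ≤ (A 0 + c * S n) / n :=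
      div_le_div_of_nonneg_right (hcard n) hnpos.le
    have h2 : (A 0 + c * (S n : ℝ)) / n = A 0 / n + c * ((1 / (n:ℝ)) * S n) := by
      field_simp
    exact h1.trans (le_of_eq h2)
  have hcf : c * f n ≤ c * (L + δ) := mul_le_mul_of_nonneg_left hfn.le hc0
  have hkey : μ x - δ ≤ δ + c * (L + δ) :=
    hμn.trans (hdiv.trans (add_le_add hδn hcf))
  have hεδ : c * δ + 2 * δ = ε := by
    rw [hδ]; field_simp
  calc μ x = (μ x - δ) + δ := by ring
    _ ≤ (δ + c * (L + δ)) + δ := add_le_add_left hkey δ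
    _ = c * L + (c * δ + 2 * δ) := by ring
    _ = c * L + ε := by rw [hεδ]
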